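/- Write n in binary as n = Σ_{m≥0} b_m 2^m, and define q(n) = Σ_{m : m mod 6 ∈ {0,1,3,4}} b_m 2^m (i.e., q(n) is n with bits in positions ≡ 2, 5 (mod 6) set to zero). Then M₂(n) = t(q(n)) for all n ≥ 0, where t is the Thue–Morse sequence. -/

import Mathlib

/-- The defining recurrences of the sequence `M₂` (values in `{0,1}`). -/
def IsM2 (M : ℕ → ℕ) : Prop :=
  (∀ n, M n ≤ 1) ∧ M 0 = 0 ∧ M 1 = 1 ∧
    (∀ n, 1 ≤ n → M (4 * n) = M (2 * n + M n)) ∧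
    (∀ n, 1 ≤ n → M (4 * n + 1) = 1 - M (4 * n)) ∧
    (∀ n, M (4 * n + 2) = M (2 * n + 1 - M n)) ∧
    (∀ n, M (4 * n + 3) = 1 - M (4 * n + 2))

/-- The bit-mask operator: `q n` is `n` with the binary digits in positions
`≡ 2, 5 (mod 6)` set to zero (only positions `m ≡ 0,1,3,4 (mod 6)` are kept). -/
def qMask (n : ℕ) : ℕ :=
  ∑ m ∈ Finset.range (n + 1),
    if m % 6 = 0 ∨ m % 6 = 1 ∨ m % 6 = 3 ∨ m % 6 = 4 then n / 2 ^ m % 2 * 2 ^ m else 0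

def mask (k : ℕ) : ℕ :=
  if k % 6 = 0 ∨ k % 6 = 1 ∨ k % 6 = 3 ∨ k % 6 = 4 then 1 else 0

def aSeq : ℕ → ℕ → ℕ
  | _, 0 => 0
  | k, n+1 => (mask k * ((n+1) % 2) + aSeq (k+1) ((n+1)/2)) % 2
termination_by _ n => n
decreasing_by exact Nat.div_lt_self (Nat.succ_pos n) one_lt_two

def Qm : ℕ → ℕ → ℕ
  | _, 0 => 0
  | k, n+1 => mask k * ((n+1) % 2) + 2 * Qm (k+1) ((n+1)/2)
termination_by _ n => n
decreasing_by exact Nat.div_lt_self (Nat.succ_pos n) one_lt_two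

lemma mask_le (k : ℕ) : mask k ≤ 1 := by
  unfold mask; split <;> omega

lemma mask_mod (k : ℕ) : mask k = mask (k % 6) := by
  unfold mask; simp [Nat.mod_mod_of_dvd, Nat.mod_mod]

lemma mask_add_one (k : ℕ) : mask (k+1) = (mask k + mask (k+2)) % 2 := by
  rw [mask_mod (k+1), mask_mod k, mask_mod (k+2)]
  have h1 : (k+1) % 6 = (k % 6 + 1) % 6 := by omega
  have h2 : (k+2) % 6 = (k % 6 + 2) % 6 := by omega
  rw [h1, h2]
  have h : k % 6 < 6 := Nat.mod_lt _ (by norm_num)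
  interval_cases h3 : (k % 6) <;> decide

lemma aSeq_le (k n : ℕ) : aSeq k n ≤ 1 := by
  cases n with
  | zero => simp [aSeq]
  | succ m => rw [aSeq]; exact Nat.le_of_lt_succ (Nat.mod_lt _ (by norm_num))

lemma aSeq_two_mul (k n : ℕ) : aSeq k (2*n) = aSeq (k+1) n := by
  cases n with
  | zero => simp [aSeq]
  | succ m =>
    have h : 2*(m+1) = (2*m+1)+1 := by ring
    rw [h, aSeq]
    have h1 : (2*m+1+1) % 2 = 0 := by omega
    have h2 : (2*m+1+1) / 2 = m+1 := by omega
    rw [h1, h2]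
    have := aSeq_le (k+1) (m+1)
    omega

lemma aSeq_two_mul_add_one (k n : ℕ) : aSeq k (2*n+1) = (mask k + aSeq (k+1) n) % 2 := by
  rw [aSeq]
  have h1 : (2*n+1) % 2 = 1 := by omega
  have h2 : (2*n+1) / 2 = n := by omega
  rw [h1, h2, mul_one]

lemma aSeq_succ_eq (k : ℕ) : ∀ n, aSeq (k+1) n = (aSeq k n + aSeq (k+2) n) % 2 := by
  suffices h : ∀ n k, aSeq (k+1) n = (aSeq k n + aSeq (k+2) n) % 2 by
    intro n; exact h n k
  intro n
  induction n using Nat.strong_induction_on with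
  | _ n ih =>
    intro k
    rcases Nat.eq_zero_or_pos n with h0 | h0
    · simp [h0, aSeq]
    rcases Nat.even_or_odd n with ⟨m, hm⟩ | ⟨m, hm⟩
    · have hm' : n = 2*m := by omega
      subst hm'
      rw [aSeq_two_mul, aSeq_two_mul, aSeq_two_mul]
      exact ih m (by omega) (k+1)
    · subst hm
      rw [aSeq_two_mul_add_one, aSeq_two_mul_add_one, aSeq_two_mul_add_one]
      have h1 := mask_add_one k
      have h2 := ih m (by omega) (k+1)
      have b1 := mask_le k; have b2 := mask_le (k+1); have b3 := mask_le (k+2)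
      have c1 := aSeq_le (k+1) m; have c2 := aSeq_le (k+2) m; have c3 := aSeq_le (k+3) m
      simp only [show k+1+2=k+3 from by omega, show k+2+1=k+3 from by omega,
        show k+1+1=k+2 from by omega] at *
      omega

lemma t_Qm (t : ℕ → ℕ) (ht0 : t 0 = 0) (hte : ∀ n, t (2 * n) = t n)
    (hto : ∀ n, t (2 * n + 1) = 1 - t n) :
    ∀ n k, t (Qm k n) = aSeq k n := by
  have tle : ∀ n, t n ≤ 1 := by
    intro n
    induction n using Nat.strong_induction_on with
    | _ n ih =>
      rcases Nat.eq_zero_or_pos n with h0 | h0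
      · simp [h0, ht0]
      rcases Nat.even_or_odd n with ⟨m, hm⟩ | ⟨m, hm⟩
      · have hm' : n = 2*m := by omega
        subst hm'
        rw [hte m]; exact ih m (by omega)
      · subst hm; rw [hto m]; omega
  intro n
  induction n using Nat.strong_induction_on with
  | _ n ih =>
    intro k
    rcases Nat.eq_zero_or_pos n with h0 | h0
    · simp [h0, Qm, aSeq, ht0]
    obtain ⟨m, rfl⟩ : ∃ m, n = m + 1 := ⟨n - 1, by omega⟩
    rw [Qm, aSeq]
    have ihm := ih ((m+1)/2) (by omega) (k+1)
    have hb : (m+1) % 2 = 0 ∨ (m+1) % 2 = 1 := by omega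
    have hmk : mask k = 0 ∨ mask k = 1 := by have := mask_le k; omega
    have hal := aSeq_le (k+1) ((m+1)/2)
    rcases hmk with hmk | hmk <;> rcases hb with hb | hb <;>
      rw [hmk, hb] <;> simp only [mul_zero, mul_one, zero_mul, zero_add, one_mul]
    · rw [hte, ihm]; omega
    · rw [hte, ihm]; omega
    · rw [hte, ihm]; omega
    · rw [show 1 + 2 * Qm (k+1) ((m+1)/2) = 2 * Qm (k+1) ((m+1)/2) + 1 from by ring,
        hto, ihm]
      omega

lemma Qm_eq_sum : ∀ j k n, n < 2^j →
    Qm k n = ∑ m ∈ Finset.range j, mask (k+m) * (n / 2^m % 2) * 2^m := by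
  intro j
  induction j with
  | zero =>
    intro k n hn
    interval_cases n
    simp [Qm]
  | succ j ihj =>
    intro k n hn
    rcases Nat.eq_zero_or_pos n with h0 | h0
    · subst h0
      simp [Qm, Nat.zero_div]
    obtain ⟨m0, rfl⟩ : ∃ m, n = m + 1 := ⟨n - 1, by omega⟩
    rw [Qm, Finset.sum_range_succ']
    have h2j : (2:ℕ)^(j+1) = 2 * 2^j := by ring
    have harg : (m0+1)/2 < 2^j := by omega
    rw [ihj (k+1) ((m0+1)/2) harg, Finset.mul_sum]
    have hterm : ∀ i, 2 * (mask (k+1+i) * ((m0+1)/2 / 2^i % 2) * 2^i)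
        = mask (k+(i+1)) * ((m0+1) / 2^(i+1) % 2) * 2^(i+1) := by
      intro i
      have hd : (m0+1)/2/2^i = (m0+1)/2^(i+1) := by
        rw [Nat.div_div_eq_div_mul, pow_succ']
      rw [hd, show k+1+i = k+(i+1) from by ring, pow_succ]
      ring
    simp only [hterm]
    simp [pow_zero, mul_one, Nat.pow_zero, Nat.div_one]
    ring

lemma qMask_eq_Qm (n : ℕ) : qMask n = Qm 0 n := by
  rw [qMask, Qm_eq_sum (n+1) 0 n (lt_of_lt_of_le (Nat.lt_two_pow_self (n := n))
    (Nat.pow_le_pow_right (by norm_num) (by omega)))]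
  apply Finset.sum_congr rfl
  intro m _
  rw [zero_add]
  unfold mask
  split_ifs <;> simp

lemma mask0 : mask 0 = 1 := by decide
lemma mask1 : mask 1 = 1 := by decide

lemma a_4n (n : ℕ) : aSeq 0 (4*n) = aSeq 2 n := by
  rw [show 4*n = 2*(2*n) from by ring, aSeq_two_mul, aSeq_two_mul]

lemma a_4n1 (n : ℕ) : aSeq 0 (4*n+1) = (1 + aSeq 2 n) % 2 := by
  rw [show 4*n+1 = 2*(2*n)+1 from by ring, aSeq_two_mul_add_one, aSeq_two_mul, mask0]

lemma a_4n2 (n : ℕ) : aSeq 0 (4*n+2) = (1 + aSeq 2 n) % 2 := by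
  rw [show 4*n+2 = 2*(2*n+1) from by ring, aSeq_two_mul, aSeq_two_mul_add_one, mask1]

lemma a_4n3 (n : ℕ) : aSeq 0 (4*n+3) = aSeq 2 n := by
  rw [show 4*n+3 = 2*(2*n+1)+1 from by ring, aSeq_two_mul_add_one, mask0,
    aSeq_two_mul_add_one, mask1]
  have := aSeq_le 2 n
  simp only [show (1:ℕ)+1 = 2 from rfl] at *
  omega

lemma a_key1 (n : ℕ) : aSeq 0 (2*n + aSeq 0 n) = aSeq 2 n := by
  have h1 : aSeq 1 n = (aSeq 0 n + aSeq 2 n) % 2 := aSeq_succ_eq 0 n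
  have b0 := aSeq_le 0 n
  have b2 := aSeq_le 2 n
  rcases (show aSeq 0 n = 0 ∨ aSeq 0 n = 1 from by omega) with h | h <;> rw [h]
  · rw [add_zero, aSeq_two_mul]
    simp only [Nat.zero_add]
    omega
  · rw [aSeq_two_mul_add_one, mask0]
    simp only [Nat.zero_add]
    omega

lemma a_key2 (n : ℕ) : aSeq 0 (2*n + 1 - aSeq 0 n) = (1 + aSeq 2 n) % 2 := by
  have h1 : aSeq 1 n = (aSeq 0 n + aSeq 2 n) % 2 := aSeq_succ_eq 0 n
  have b0 := aSeq_le 0 n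
  have b2 := aSeq_le 2 n
  rcases (show aSeq 0 n = 0 ∨ aSeq 0 n = 1 from by omega) with h | h <;> rw [h]
  · rw [Nat.sub_zero, aSeq_two_mul_add_one, mask0]
    simp only [Nat.zero_add]
    omega
  · rw [Nat.add_sub_cancel, aSeq_two_mul]
    simp only [Nat.zero_add]
    omega

/-- `M₂(n) = t(q(n))` for all `n ≥ 0`, where `t` is the Thue–Morse
sequence. -/
theorem M2_eq_thueMorse_qMask (M t : ℕ → ℕ) (hM : IsM2 M)
    (ht0 : t 0 = 0) (hte : ∀ n, t (2 * n) = t n) (hto : ∀ n, t (2 * n + 1) = 1 - t n) :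
    ∀ n, M n = t (qMask n) := by
  obtain ⟨hle, h0, h1, h4, h41, h42, h43⟩ := hM
  have htQ : ∀ n, t (qMask n) = aSeq 0 n := by
    intro n
    rw [qMask_eq_Qm, t_Qm t ht0 hte hto]
  have main : ∀ n, M n = aSeq 0 n := by
    intro n
    induction n using Nat.strong_induction_on with
    | _ n ih =>
      rcases (show n = 0 ∨ n = 1 ∨ 2 ≤ n from by omega) with rfl | rfl | h2
      · simpa [aSeq] using h0
      · rw [h1, show (1:ℕ) = 2*0+1 from rfl, aSeq_two_mul_add_one, mask0]
        simp [aSeq]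
      rcases (show n % 4 = 0 ∨ n % 4 = 1 ∨ n % 4 = 2 ∨ n % 4 = 3 from by omega)
        with hr | hr | hr | hr
      · obtain ⟨m, rfl⟩ : ∃ m, n = 4*m := ⟨n/4, by omega⟩
        have hm : 1 ≤ m := by omega
        have hMm := ih m (by omega)
        have ha0 := aSeq_le 0 m
        rw [h4 m hm, hMm, ih (2*m + aSeq 0 m) (by omega), a_key1, a_4n]
      · obtain ⟨m, rfl⟩ : ∃ m, n = 4*m+1 := ⟨n/4, by omega⟩
        have hm : 1 ≤ m := by omega
        rw [h41 m hm, ih (4*m) (by omega), a_4n1, a_4n]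
        have := aSeq_le 2 m
        omega
      · obtain ⟨m, rfl⟩ : ∃ m, n = 4*m+2 := ⟨n/4, by omega⟩
        have hMm := ih m (by omega)
        have ha0 := aSeq_le 0 m
        rw [h42 m, hMm, ih (2*m + 1 - aSeq 0 m) (by omega), a_key2, a_4n2]
      · obtain ⟨m, rfl⟩ : ∃ m, n = 4*m+3 := ⟨n/4, by omega⟩
        rw [h43 m, ih (4*m+2) (by omega), a_4n2, a_4n3]
        have := aSeq_le 2 m
        omega
  intro n
  rw [main n, htQ n]
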